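/- Let k ≥ 1 be an integer, let p̲_l ∈ (0,1), and let p̄_{b_1} ≤ … ≤ p̄_{b_k} be reals with p̄_{S_t} := Σ_{j=1}^t p̄_{b_j} ∈ (0,1) for every t ∈ {1,…,k}. Assume p̲_l + Σ_{j=1}^k p̄_{b_j} ≤ 1, and let R_l be the unique real number satisfying Φ(Φ⁻¹(p̲_l) − R_l/σ) − min_{1≤t≤k} Φ(Φ⁻¹(p̄_{S_t}) + R_l/σ)/t = 0. Then for every δ ∈ ℝ^d with δ ≠ 0 and ‖δ‖₂ > R_l, defining A_l = {z ∈ ℝ^d : δᵀ(z−x) ≤ σ‖δ‖₂ Φ⁻¹(p̲_l)} and B_{S_t} = {z ∈ ℝ^d : δᵀ(z−x) ≥ σ‖δ‖₂ Φ⁻¹(1−p̄_{S_t})}, there exist k pairwise disjoint measurable sets C_1,…,C_k ⊆ ℝ^d \ A_l such that for every j ∈ {1,…,k}, Pr(X ∈ C_j) = p̄_{b_j} and Pr(Y ∈ C_j) ≥ min_{1≤t≤k} Pr(Y ∈ B_{S_t})/t. -/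

import Mathlib

open MeasureTheory ProbabilityTheory Real Filter

/-- The standard normal cumulative distribution function Φ. -/
noncomputable def Phi (t : ℝ) : ℝ := (gaussianReal 0 1 (Set.Iic t)).toReal

/-- The inverse Φ⁻¹ of the standard normal CDF (meaningful on (0,1)). -/
noncomputable def PhiInv : ℝ → ℝ := Function.invFun Phi

/-- The Gaussian measure N(m, σ²I) on ℝ^d. -/
noncomputable def gaussianVec {d : ℕ} (m : Fin d → ℝ) (σ : ℝ) :
    Measure (Fin d → ℝ) :=
  Measure.pi fun i => gaussianReal (m i) (Real.toNNReal (σ ^ 2))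

/-- Dot product on ℝ^d. -/
def dotp {d : ℕ} (a b : Fin d → ℝ) : ℝ := ∑ i, a i * b i

/-- Euclidean (ℓ₂) norm on ℝ^d. -/
noncomputable def l2norm {d : ℕ} (a : Fin d → ℝ) : ℝ := Real.sqrt (∑ i, a i ^ 2)


open Set
open scoped ENNReal NNReal

section AuxLemmas


lemma gaussNA (μ : ℝ) {v : NNReal} (hv : v ≠ 0) :
    NullSingletonClass (gaussianReal μ v) :=
  ⟨fun b => gaussianReal_absolutelyContinuous μ hv (measure_singleton b)⟩

lemma continuous_cdf_of_noAtoms (ρ : Measure ℝ) [IsProbabilityMeasure ρ]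
    (h : ∀ b : ℝ, ρ {b} = 0) : Continuous (cdf ρ) := by
  rw [continuous_iff_continuousAt]
  intro x
  rw [(monotone_cdf ρ).continuousAt_iff_leftLim_eq_rightLim]
  have h1 : Function.rightLim (cdf ρ) x = cdf ρ x := (cdf ρ).rightLim_eq x
  have h2 : (cdf ρ).measure {x} = 0 := by rw [measure_cdf]; exact h x
  rw [StieltjesFunction.measure_singleton, ENNReal.ofReal_eq_zero] at h2
  have h3 : Function.leftLim (cdf ρ) x ≤ cdf ρ x := (monotone_cdf ρ).leftLim_le le_rfl
  rw [h1]; linarith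

lemma Phi_eq_cdf : Phi = ⇑(cdf (gaussianReal 0 1)) := by
  funext t; rw [cdf_eq_real]; rfl

lemma nnone_ne_zero : (1 : NNReal) ≠ 0 := one_ne_zero

lemma continuous_Phi : Continuous Phi := by
  rw [Phi_eq_cdf]
  exact continuous_cdf_of_noAtoms _ (fun b => gaussianReal_absolutelyContinuous 0 nnone_ne_zero (measure_singleton b))

lemma gauss_pos_Ioc {a b : ℝ} (h : a < b) : 0 < gaussianReal 0 1 (Ioc a b) := by
  rcases eq_or_ne (gaussianReal 0 1 (Ioc a b)) 0 with h0 | h0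
  · exfalso
    have := gaussianReal_absolutelyContinuous' 0 nnone_ne_zero (s := Ioc a b) h0
    rw [Real.volume_Ioc, ENNReal.ofReal_eq_zero] at this
    linarith
  · exact pos_iff_ne_zero.mpr h0

lemma Phi_strictMono : StrictMono Phi := by
  intro a b hab
  have hsplit : gaussianReal 0 1 (Iic a) + gaussianReal 0 1 (Ioc a b) = gaussianReal 0 1 (Iic b) := by
    rw [← measure_union (Set.Iic_disjoint_Ioc le_rfl) measurableSet_Ioc, Set.Iic_union_Ioc_eq_Iic hab.le]
  have hfin : ∀ s : Set ℝ, gaussianReal 0 1 s ≠ ⊤ := fun s => measure_ne_top _ s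
  unfold Phi
  rw [← hsplit, ENNReal.toReal_add (hfin _) (hfin _)]
  have := gauss_pos_Ioc hab
  have : 0 < (gaussianReal 0 1 (Ioc a b)).toReal := ENNReal.toReal_pos this.ne' (hfin _)
  linarith

lemma Phi_pos (t : ℝ) : 0 < Phi t := by
  have h : 0 < gaussianReal 0 1 (Iic t) :=
    lt_of_lt_of_le (gauss_pos_Ioc (show t - 1 < t by linarith)) (measure_mono Set.Ioc_subset_Iic_self)
  exact ENNReal.toReal_pos h.ne' (measure_ne_top _ _)

lemma Phi_lt_one (t : ℝ) : Phi t < 1 := by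
  have hsplit : gaussianReal 0 1 (Iic t) + gaussianReal 0 1 (Ioc t (t+1)) ≤ 1 := by
    rw [← measure_union (Set.Iic_disjoint_Ioc le_rfl) measurableSet_Ioc]
    exact prob_le_one
  have h2 := gauss_pos_Ioc (show t < t + 1 by linarith)
  have hfin : ∀ s : Set ℝ, gaussianReal 0 1 s ≠ ⊤ := fun s => measure_ne_top _ s
  have := ENNReal.toReal_mono (by norm_num) hsplit
  rw [ENNReal.toReal_add (hfin _) (hfin _), ENNReal.toReal_one] at this
  have h3 : 0 < (gaussianReal 0 1 (Ioc t (t+1))).toReal := ENNReal.toReal_pos h2.ne' (hfin _)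
  unfold Phi
  linarith

lemma Phi_tendsto_atBot : Tendsto Phi atBot (nhds 0) := by
  rw [Phi_eq_cdf]; exact tendsto_cdf_atBot _

lemma Phi_tendsto_atTop : Tendsto Phi atTop (nhds 1) := by
  rw [Phi_eq_cdf]; exact tendsto_cdf_atTop _

lemma Phi_surj {p : ℝ} (hp : p ∈ Set.Ioo (0:ℝ) 1) : ∃ t, Phi t = p := by
  obtain ⟨a, ha⟩ := (Phi_tendsto_atBot.eventually_lt_const hp.1).exists
  obtain ⟨b, hb⟩ := (Phi_tendsto_atTop.eventually_const_lt hp.2).exists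
  have hab : min a b ≤ b := min_le_right a b
  have h1 : Phi (min a b) ≤ Phi a := Phi_strictMono.monotone (min_le_left a b)
  have : p ∈ Set.Icc (Phi (min a b)) (Phi b) := ⟨by linarith, (hb.le)⟩
  obtain ⟨t, _, ht⟩ := intermediate_value_Icc hab continuous_Phi.continuousOn this
  exact ⟨t, ht⟩

lemma Phi_PhiInv {p : ℝ} (hp : p ∈ Set.Ioo (0:ℝ) 1) : Phi (PhiInv p) = p :=
  Function.invFun_eq (Phi_surj hp)

lemma PhiInv_le_iff {p : ℝ} (hp : p ∈ Set.Ioo (0:ℝ) 1) (w : ℝ) :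
    PhiInv p ≤ w ↔ p ≤ Phi w := by
  constructor
  · intro h
    calc p = Phi (PhiInv p) := (Phi_PhiInv hp).symm
    _ ≤ Phi w := Phi_strictMono.monotone h
  · intro h
    by_contra hc
    push_neg at hc
    have := Phi_strictMono hc
    rw [Phi_PhiInv hp] at this
    linarith

lemma PhiInv_mono {p q : ℝ} (hp : p ∈ Set.Ioo (0:ℝ) 1) (hq : q ∈ Set.Ioo (0:ℝ) 1)
    (h : p ≤ q) : PhiInv p ≤ PhiInv q := by
  rw [PhiInv_le_iff hp]
  rw [Phi_PhiInv hq]; exact h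

lemma Phi_eq_iff {p : ℝ} (hp : p ∈ Set.Ioo (0:ℝ) 1) (w : ℝ) :
    Phi w = p ↔ w = PhiInv p := by
  constructor
  · intro h
    exact Phi_strictMono.injective (by rw [h, Phi_PhiInv hp])
  · rintro rfl; exact Phi_PhiInv hp


lemma pdf_conv_identity (m1 m2 : ℝ) (v1 v2 : NNReal) (hv1 : v1 ≠ 0) (hv2 : v2 ≠ 0) (u a : ℝ) :
    gaussianPDFReal m1 v1 a * gaussianPDFReal m2 v2 (u - a)
      = gaussianPDFReal (m1 + m2) (v1 + v2) u
        * gaussianPDFReal (m1 + v1 * (u - m1 - m2) / (v1 + v2)) (v1 * v2 / (v1 + v2)) a := by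
  have hv1' : (0:ℝ) < v1 := lt_of_le_of_ne (v1.coe_nonneg) (by exact_mod_cast (Ne.symm hv1))
  have hv2' : (0:ℝ) < v2 := lt_of_le_of_ne (v2.coe_nonneg) (by exact_mod_cast (Ne.symm hv2))
  have hsum : (0:ℝ) < (v1:ℝ) + v2 := by linarith
  have hcoe : ((v1 * v2 / (v1 + v2) : NNReal) : ℝ) = (v1:ℝ) * v2 / ((v1:ℝ) + v2) := by
    push_cast; ring
  have hcoe2 : ((v1 + v2 : NNReal) : ℝ) = (v1:ℝ) + v2 := by push_cast; ring
  simp only [gaussianPDFReal, hcoe, hcoe2]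
  have hC : (√(2 * π * (v1:ℝ)))⁻¹ * (√(2 * π * (v2:ℝ)))⁻¹
      = (√(2 * π * ((v1:ℝ) + v2)))⁻¹ * (√(2 * π * ((v1:ℝ) * v2 / ((v1:ℝ) + v2))))⁻¹ := by
    rw [← mul_inv, ← mul_inv, ← Real.sqrt_mul (by positivity), ← Real.sqrt_mul (by positivity)]
    congr 2
    field_simp
  have hE : rexp (-(a - m1) ^ 2 / (2 * v1)) * rexp (-(u - a - m2) ^ 2 / (2 * v2))
      = rexp (-(u - (m1 + m2)) ^ 2 / (2 * ((v1:ℝ) + v2)))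
        * rexp (-(a - (m1 + (v1:ℝ) * (u - m1 - m2) / ((v1:ℝ) + v2))) ^ 2
            / (2 * ((v1:ℝ) * v2 / ((v1:ℝ) + v2)))) := by
    rw [← Real.exp_add, ← Real.exp_add]
    congr 1
    field_simp
    ring
  calc (√(2 * π * (v1:ℝ)))⁻¹ * rexp (-(a - m1) ^ 2 / (2 * v1))
        * ((√(2 * π * (v2:ℝ)))⁻¹ * rexp (-(u - a - m2) ^ 2 / (2 * v2)))
      = (√(2 * π * (v1:ℝ)))⁻¹ * (√(2 * π * (v2:ℝ)))⁻¹
        * (rexp (-(a - m1) ^ 2 / (2 * v1)) * rexp (-(u - a - m2) ^ 2 / (2 * v2))) := by ring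
    _ = (√(2 * π * ((v1:ℝ) + v2)))⁻¹ * (√(2 * π * ((v1:ℝ) * v2 / ((v1:ℝ) + v2))))⁻¹
        * (rexp (-(u - (m1 + m2)) ^ 2 / (2 * ((v1:ℝ) + v2)))
          * rexp (-(a - (m1 + (v1:ℝ) * (u - m1 - m2) / ((v1:ℝ) + v2))) ^ 2
            / (2 * ((v1:ℝ) * v2 / ((v1:ℝ) + v2))))) := by rw [hC, hE]
    _ = _ := by ring


lemma gauss_conv (m1 m2 : ℝ) (v1 v2 : NNReal) :
    Measure.map (fun p : ℝ × ℝ => p.1 + p.2) ((gaussianReal m1 v1).prod (gaussianReal m2 v2))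
      = gaussianReal (m1 + m2) (v1 + v2) := by
  by_cases hv1 : v1 = 0
  · subst hv1
    rw [gaussianReal_zero_var, Measure.dirac_prod, Measure.map_map (by fun_prop) (by fun_prop)]
    have h : ((fun p : ℝ × ℝ => p.1 + p.2) ∘ (Prod.mk m1)) = fun y => m1 + y := rfl
    rw [h, gaussianReal_map_const_add, zero_add, add_comm m2 m1]
  by_cases hv2 : v2 = 0
  · subst hv2
    rw [gaussianReal_zero_var, Measure.prod_dirac, Measure.map_map (by fun_prop) (by fun_prop)]
    have h : ((fun p : ℝ × ℝ => p.1 + p.2) ∘ (fun x => (x, m2))) = fun y => y + m2 := rfl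
    rw [h, gaussianReal_map_add_const, add_zero]
  have hvaux : v1 * v2 / (v1 + v2) ≠ 0 := by
    have h1 : v1 * v2 ≠ 0 := mul_ne_zero hv1 hv2
    have h2 : v1 + v2 ≠ 0 := by simp [hv1, hv2]
    simp [div_eq_zero_iff, h1, h2]
  have hvs : v1 + v2 ≠ 0 := by simp [hv1, hv2]
  ext s hs
  rw [Measure.map_apply (by fun_prop) hs,
    Measure.prod_apply (hs.preimage (by fun_prop))]
  set ind : ℝ → ℝ≥0∞ := s.indicator (fun _ => (1:ℝ≥0∞)) with hind
  have hindm : Measurable ind := measurable_const.indicator hs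
  have hslice : ∀ a : ℝ,
      gaussianReal m2 v2 (Prod.mk a ⁻¹' ((fun p : ℝ × ℝ => p.1 + p.2) ⁻¹' s))
        = ∫⁻ u, ind u * gaussianPDF m2 v2 (u - a) := by
    intro a
    have hB : MeasurableSet {y : ℝ | a + y ∈ s} := (measurable_const_add a) hs
    have hset : (Prod.mk a ⁻¹' ((fun p : ℝ × ℝ => p.1 + p.2) ⁻¹' s)) = {y | a + y ∈ s} := rfl
    rw [hset, gaussianReal_of_var_ne_zero m2 hv2, withDensity_apply _ hB,
      ← lintegral_indicator hB]
    have hF : ∀ y : ℝ, ({y : ℝ | a + y ∈ s}).indicator (gaussianPDF m2 v2) y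
        = ind (a + y) * gaussianPDF m2 v2 y := by
      intro y
      by_cases hy : a + y ∈ s <;> simp [Set.indicator, hy, hind]
    simp only [hF]
    have := lintegral_add_right_eq_self (μ := volume) (fun y => ind (a + y) * gaussianPDF m2 v2 y) (-a)
    rw [← this]
    congr 1
    funext u
    have h1 : a + (u + -a) = u := by ring
    have h2 : u + -a = u - a := by ring
    rw [h1, h2]
  simp only [hslice]
  rw [gaussianReal_of_var_ne_zero m1 hv1]
  have hGm : Measurable fun a : ℝ => ∫⁻ u, ind u * gaussianPDF m2 v2 (u - a) := by
    exact Measurable.lintegral_prod_right' (f := fun p : ℝ × ℝ => ind p.2 * gaussianPDF m2 v2 (p.2 - p.1))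
      ((hindm.comp measurable_snd).mul ((measurable_gaussianPDF m2 v2).comp (measurable_snd.sub measurable_fst)))
  rw [lintegral_withDensity_eq_lintegral_mul _ (measurable_gaussianPDF m1 v1) hGm]
  have hmeas2 : ∀ a : ℝ, Measurable (fun u : ℝ => ind u * gaussianPDF m2 v2 (u - a)) := by
    intro a
    exact hindm.mul ((measurable_gaussianPDF m2 v2).comp (measurable_sub_const a))
  have hmeas3 : ∀ u : ℝ, Measurable (fun a : ℝ => gaussianPDF m1 v1 a * gaussianPDF m2 v2 (u - a)) := by
    intro u
    exact (measurable_gaussianPDF m1 v1).mul ((measurable_gaussianPDF m2 v2).comp (measurable_const_sub u))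
  have hstep : ∀ a : ℝ, (gaussianPDF m1 v1 * fun a => ∫⁻ u, ind u * gaussianPDF m2 v2 (u - a)) a
      = ∫⁻ u, gaussianPDF m1 v1 a * (ind u * gaussianPDF m2 v2 (u - a)) := by
    intro a
    simp only [Pi.mul_apply]
    rw [← lintegral_const_mul _ (hmeas2 a)]
  simp only [hstep]
  rw [lintegral_lintegral_swap]
  swap
  · apply Measurable.aemeasurable
    apply Measurable.mul
    · exact (measurable_gaussianPDF m1 v1).comp measurable_fst
    · exact ((hindm.comp measurable_snd).mul ((measurable_gaussianPDF m2 v2).comp (measurable_snd.sub measurable_fst)))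
  have hinner : ∀ u : ℝ, ∫⁻ a, gaussianPDF m1 v1 a * (ind u * gaussianPDF m2 v2 (u - a))
      = ind u * gaussianPDF (m1 + m2) (v1 + v2) u := by
    intro u
    have hre : ∀ a : ℝ, gaussianPDF m1 v1 a * (ind u * gaussianPDF m2 v2 (u - a))
        = ind u * (gaussianPDF m1 v1 a * gaussianPDF m2 v2 (u - a)) := fun a => by ring
    simp only [hre]
    rw [lintegral_const_mul _ (hmeas3 u)]
    congr 1
    have hpt : ∀ a : ℝ, gaussianPDF m1 v1 a * gaussianPDF m2 v2 (u - a)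
        = gaussianPDF (m1 + m2) (v1 + v2) u
          * gaussianPDF (m1 + v1 * (u - m1 - m2) / (v1 + v2)) (v1 * v2 / (v1 + v2)) a := by
      intro a
      simp only [gaussianPDF]
      rw [← ENNReal.ofReal_mul (gaussianPDFReal_nonneg _ _ _),
        ← ENNReal.ofReal_mul (gaussianPDFReal_nonneg _ _ _),
        pdf_conv_identity m1 m2 v1 v2 hv1 hv2 u a]
    simp only [hpt]
    rw [lintegral_const_mul _ (measurable_gaussianPDF _ _),
      lintegral_gaussianPDF_eq_one _ hvaux, mul_one]
  simp only [hinner]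
  have hfin : ∀ u : ℝ, ind u * gaussianPDF (m1 + m2) (v1 + v2) u
      = s.indicator (gaussianPDF (m1 + m2) (v1 + v2)) u := by
    intro u
    by_cases hu : u ∈ s <;> simp [Set.indicator, hu, hind]
  simp only [hfin]
  rw [lintegral_indicator hs, gaussianReal_of_var_ne_zero _ hvs, withDensity_apply _ hs]


lemma gauss_pi_map : ∀ (n : ℕ) (c mm : Fin n → ℝ) (v : NNReal),
    Measure.map (fun z : Fin n → ℝ => ∑ i, c i * z i) (Measure.pi fun i => gaussianReal (mm i) v)
      = gaussianReal (∑ i, c i * mm i) ((∑ i, Real.toNNReal (c i ^ 2)) * v) := by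
  intro n
  induction n with
  | zero =>
    intro c mm v
    simp only [Finset.univ_eq_empty, Finset.sum_empty, zero_mul]
    rw [show (gaussianReal 0 0) = Measure.dirac 0 from gaussianReal_zero_var 0]
    have : (fun _ : Fin 0 → ℝ => (0:ℝ)) = fun _ => (0:ℝ) := rfl
    rw [Measure.map_const]
    simp
  | succ n IH =>
    intro c mm v
    set e := MeasurableEquiv.piFinSuccAbove (fun _ : Fin (n+1) => ℝ) 0 with he
    have hmp := measurePreserving_piFinSuccAbove (fun i => gaussianReal (mm i) v) 0
    set φ : ℝ → ℝ := fun a => c 0 * a with hφ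
    set ψ : (Fin n → ℝ) → ℝ := fun w => ∑ i, c i.succ * w i with hψ
    have hψm : Measurable ψ := by fun_prop
    have hcomp : (fun z : Fin (n+1) → ℝ => ∑ i, c i * z i)
        = (fun p : ℝ × ℝ => p.1 + p.2) ∘ (Prod.map φ ψ) ∘ ⇑e := by
      funext z
      simp only [Function.comp_apply, he, MeasurableEquiv.piFinSuccAbove, Prod.map,
        MeasurableEquiv.coe_mk]
      rw [Fin.sum_univ_succ]
      simp [hφ, hψ, Fin.succAbove_zero, Fin.tail]
    rw [hcomp, ← Measure.map_map (by fun_prop) (by fun_prop),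
      ← Measure.map_map (by fun_prop) e.measurable, hmp.map_eq,
      ← Measure.map_prod_map _ _ (by fun_prop) hψm]
    have hvar0 : (⟨c 0 ^ 2, sq_nonneg _⟩ : ℝ≥0) = Real.toNNReal (c 0 ^ 2) := by
      ext; simp [Real.coe_toNNReal _ (sq_nonneg (c 0))]
    have h1 : Measure.map φ (gaussianReal (mm 0) v) = gaussianReal (c 0 * mm 0) (Real.toNNReal (c 0 ^ 2) * v) := by
      rw [← hvar0]; exact gaussianReal_map_const_mul (c 0)
    have h2 : Measure.map ψ (Measure.pi fun j : Fin n => gaussianReal (mm ((0:Fin (n+1)).succAbove j)) v)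
        = gaussianReal (∑ i : Fin n, c i.succ * mm i.succ) ((∑ i : Fin n, Real.toNNReal (c i.succ ^ 2)) * v) := by
      have : (fun j : Fin n => gaussianReal (mm ((0:Fin (n+1)).succAbove j)) v)
          = fun j : Fin n => gaussianReal (mm j.succ) v := by
        funext j; rw [Fin.succAbove_zero]
      rw [this]
      exact IH (fun i => c i.succ) (fun i => mm i.succ) v
    rw [h1, h2, gauss_conv]
    congr 1
    · rw [Fin.sum_univ_succ]
    · rw [Fin.sum_univ_succ, add_mul]


noncomputable def mkStj (H : ℝ → ℝ) (hm : Monotone H) (hc : Continuous H) : StieltjesFunction ℝ :=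
  ⟨H, hm, fun x => (hc.continuousAt).continuousWithinAt⟩

@[simp] lemma mkStj_apply (H : ℝ → ℝ) (hm : Monotone H) (hc : Continuous H) (x : ℝ) :
    mkStj H hm hc x = H x := rfl

lemma stieltjes_eq_on_Iic (f g : StieltjesFunction ℝ) (c C : ℝ)
    (h : ∀ x ≤ c, f x = g x + C) {A : Set ℝ} (hA : MeasurableSet A) (hsub : A ⊆ Iic c) :
    f.measure A = g.measure A := by
  have hres : f.measure.restrict (Iic c) = g.measure.restrict (Iic c) := by
    apply Measure.ext_of_Ioc'
    · intro a b _
      rw [Measure.restrict_apply measurableSet_Ioc]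
      exact ne_top_of_le_ne_top (f.measure_Ioc a b ▸ ENNReal.ofReal_ne_top)
        (measure_mono Set.inter_subset_left)
    · intro a b _
      rw [Measure.restrict_apply measurableSet_Ioc, Measure.restrict_apply measurableSet_Ioc,
        Set.Ioc_inter_Iic]
      rcases le_or_gt (b ⊓ c) a with h1 | h1
      · rw [Set.Ioc_eq_empty (not_lt.mpr h1)]
        simp
      · rw [f.measure_Ioc, g.measure_Ioc, h (b ⊓ c) inf_le_right, h a (h1.le.trans inf_le_right)]
        ring_nf
  calc f.measure A = f.measure.restrict (Iic c) A := by
        rw [Measure.restrict_apply hA, Set.inter_eq_self_of_subset_left hsub]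
    _ = g.measure.restrict (Iic c) A := by rw [hres]
    _ = g.measure A := by
        rw [Measure.restrict_apply hA, Set.inter_eq_self_of_subset_left hsub]

lemma stieltjes_eq_on_Ioi (f g : StieltjesFunction ℝ) (c C : ℝ)
    (h : ∀ x, c ≤ x → f x = g x + C) {A : Set ℝ} (hA : MeasurableSet A) (hsub : A ⊆ Ioi c) :
    f.measure A = g.measure A := by
  have hres : f.measure.restrict (Ioi c) = g.measure.restrict (Ioi c) := by
    apply Measure.ext_of_Ioc'
    · intro a b _
      rw [Measure.restrict_apply measurableSet_Ioc]
      exact ne_top_of_le_ne_top (f.measure_Ioc a b ▸ ENNReal.ofReal_ne_top)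
        (measure_mono Set.inter_subset_left)
    · intro a b _
      rw [Measure.restrict_apply measurableSet_Ioc, Measure.restrict_apply measurableSet_Ioc,
        Set.Ioc_inter_Ioi]
      rcases le_or_gt b (a ⊔ c) with h1 | h1
      · rw [Set.Ioc_eq_empty (not_lt.mpr h1)]
        simp
      · rw [f.measure_Ioc, g.measure_Ioc, h b (le_sup_right.trans h1.le),
          h (a ⊔ c) le_sup_right]
        ring_nf
  calc f.measure A = f.measure.restrict (Ioi c) A := by
        rw [Measure.restrict_apply hA, Set.inter_eq_self_of_subset_left hsub]
    _ = g.measure.restrict (Ioi c) A := by rw [hres]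
    _ = g.measure A := by
        rw [Measure.restrict_apply hA, Set.inter_eq_self_of_subset_left hsub]

lemma stieltjes_translate (f : StieltjesFunction ℝ) (a0 : ℝ) (g : StieltjesFunction ℝ)
    (hg : ∀ x, g x = f (x + a0)) {A : Set ℝ} (hA : MeasurableSet A) :
    g.measure A = f.measure ((fun x => x - a0) ⁻¹' A) := by
  have hmap : Measure.map (fun x : ℝ => x - a0) f.measure = g.measure := by
    apply Measure.ext_of_Ioc'
    · intro a b _
      rw [Measure.map_apply (by fun_prop) measurableSet_Ioc]
      have hpre : (fun x : ℝ => x - a0) ⁻¹' (Ioc a b) = Ioc (a + a0) (b + a0) := by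
        ext x; simp [Set.mem_Ioc, lt_sub_iff_add_lt, sub_le_iff_le_add]
      rw [hpre, f.measure_Ioc]
      exact ENNReal.ofReal_ne_top
    · intro a b _
      rw [Measure.map_apply (by fun_prop) measurableSet_Ioc]
      have hpre : (fun x : ℝ => x - a0) ⁻¹' (Ioc a b) = Ioc (a + a0) (b + a0) := by
        ext x; simp [Set.mem_Ioc, lt_sub_iff_add_lt, sub_le_iff_le_add]
      rw [hpre, f.measure_Ioc, g.measure_Ioc, hg a, hg b]
  rw [← hmap, Measure.map_apply (by fun_prop) hA]


noncomputable def prefA {n : ℕ} (a : Fin n → ℝ) (t : Fin n) : ℝ :=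
  ∑ i ∈ Finset.univ.filter (· ≤ t), a i

lemma prefA_eq_if {n : ℕ} (a : Fin n → ℝ) (t : Fin n) :
    prefA a t = ∑ i, if i ≤ t then a i else 0 := by
  rw [prefA, Finset.sum_filter]

lemma prefA_zero {n : ℕ} (a : Fin (n+1) → ℝ) : prefA a 0 = a 0 := by
  rw [prefA_eq_if, Fin.sum_univ_succ]
  simp [Fin.le_zero_iff, Fin.succ_ne_zero]

lemma prefA_succ {n : ℕ} (a : Fin (n+2) → ℝ) (t : Fin (n+1)) :
    prefA a t.succ = a 0 + prefA (fun i => a i.succ) t := by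
  rw [prefA_eq_if, prefA_eq_if, Fin.sum_univ_succ]
  simp [Fin.zero_le, Fin.succ_le_succ_iff]

lemma prefA_castSucc {n : ℕ} (a : Fin (n+2) → ℝ) (t : Fin (n+1)) :
    prefA a t.castSucc = ∑ i ∈ Finset.univ.filter (· ≤ t), a i.castSucc := by
  rw [prefA_eq_if, Finset.sum_filter, Fin.sum_univ_castSucc]
  have hlast : ¬ (Fin.last (n+1) ≤ t.castSucc) := not_le.mpr (Fin.castSucc_lt_last t)
  simp [hlast, Fin.castSucc_le_castSucc_iff]

lemma prefA_last {n : ℕ} (a : Fin (n+1) → ℝ) : prefA a (Fin.last n) = ∑ i, a i := by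
  rw [prefA]
  congr 1
  apply Finset.filter_true_of_mem
  intro i _
  exact Fin.le_last i

lemma prefA_castSucc_le {n : ℕ} (a : Fin (n+2) → ℝ) (hmono : Monotone a) (t : Fin (n+1)) :
    prefA a t.castSucc ≤ prefA (fun i => a i.succ) t := by
  rw [prefA_castSucc, prefA]
  exact Finset.sum_le_sum fun i _ => hmono (Fin.castSucc_le_succ i)

lemma prefA_le_total {n : ℕ} (a : Fin (n+1) → ℝ) (hpos : ∀ i, 0 ≤ a i) (t : Fin (n+1)) :
    prefA a t ≤ ∑ i, a i := by
  rw [prefA]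
  exact Finset.sum_le_sum_of_subset_of_nonneg (Finset.filter_subset _ _) (fun i _ _ => hpos i)

lemma split_measure (ρ : Measure ℝ) {S : Set ℝ} (hS : MeasurableSet S) (c : ℝ) :
    ρ (S ∩ Iic c) + ρ (S ∩ Ioi c) = ρ S := by
  have h := measure_inter_add_diff (μ := ρ) S (measurableSet_Iic (a := c))
  rwa [Set.diff_eq, Set.compl_Iic] at h

lemma core_division : ∀ (n : ℕ) (f : StieltjesFunction ℝ), Continuous f → f 0 = 0 →
    ∀ (a : Fin (n+1) → ℝ), 0 < a 0 → Monotone a → ∀ m : ℝ,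
    (∀ t : Fin (n+1), (((t:ℕ) : ℝ) + 1) * m ≤ f (prefA a t)) →
    ∃ K : Fin (n+1) → Set ℝ,
      (∀ j, MeasurableSet (K j)) ∧
      (Pairwise fun i j => Disjoint (K i) (K j)) ∧
      (∀ j, K j ⊆ Set.Ioc 0 (∑ i, a i)) ∧
      (∀ j, volume (K j) = ENNReal.ofReal (a j)) ∧
      (∀ j, ENNReal.ofReal m ≤ f.measure (K j)) := by
  intro n
  induction n with
  | zero =>
    intro f hfc hf0 a hpos hmono m hm
    refine ⟨fun _ => Ioc 0 (a 0), fun _ => measurableSet_Ioc, ?_, ?_, ?_, ?_⟩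
    · intro i j hij
      exfalso
      apply hij
      have h1 := i.isLt
      have h2 := j.isLt
      exact Fin.ext (by omega)
    · intro j
      rw [show (∑ i, a i) = a 0 from Fin.sum_univ_one a]
    · intro j
      have hj : j = 0 := by
        have h2 := j.isLt
        exact Fin.ext (by omega)
      rw [hj, Real.volume_Ioc, sub_zero]
    · intro j
      have h0 := hm 0
      rw [prefA_zero] at h0
      rw [StieltjesFunction.measure_Ioc, hf0, sub_zero]
      apply ENNReal.ofReal_le_ofReal
      have h1 : (1:ℝ) * m ≤ f (a 0) := by simpa using h0
      linarith
  | succ n IH =>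
    intro f hfc hf0 a hpos hmono m hm
    set M : ℝ := ∑ i, a i with hM
    set a' : Fin (n+1) → ℝ := fun i => a i.succ with ha'
    have hpos' : 0 < a' 0 := lt_of_lt_of_le hpos (hmono (Fin.zero_le _))
    have hmono' : Monotone a' := fun i j hij => hmono (Fin.succ_le_succ_iff.mpr hij)
    have hanonneg : ∀ i, (0:ℝ) ≤ a i := fun i => (lt_of_lt_of_le hpos (hmono (Fin.zero_le _))).le
    set M' : ℝ := ∑ i, a' i with hM'
    have hMM' : M = a 0 + M' := Fin.sum_univ_succ a
    have hM'nonneg : 0 ≤ M' := Finset.sum_nonneg fun i _ => hanonneg _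
    set φ : ℝ → ℝ := fun s => f (s + a 0) - f s with hφ
    have hφc : Continuous φ := ((hfc.comp (continuous_id.add continuous_const))).sub hfc
    have hφ0 : m ≤ φ 0 := by
      have h0 := hm 0
      rw [prefA_zero] at h0
      simp only [hφ, zero_add, hf0, sub_zero]
      have h1 : (1:ℝ) * m ≤ f (a 0) := by simpa using h0
      linarith
    -- lower-branch hypothesis, used in both cases
    have hmlow : ∀ t : Fin (n+1), (((t:ℕ) : ℝ) + 1) * m ≤ f (prefA a' t) := by
      intro t
      have h1 := hm t.castSucc
      rw [Fin.coe_castSucc] at h1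
      exact h1.trans (f.mono (prefA_castSucc_le a hmono t))
    by_cases hcase : ∃ s ∈ Icc (0:ℝ) M', φ s ≤ m
    case neg =>
      -- Case A : every window has mass > m; peel bottom window for piece 0
      push_neg at hcase
      obtain ⟨K', hK'meas, hK'disj, hK'sub, hK'vol, hK'f⟩ := IH f hfc hf0 a' hpos' hmono' m hmlow
      have hbot : m ≤ φ M' := (hcase M' ⟨hM'nonneg, le_rfl⟩).le
      have hd0 : ∀ j : Fin (n+1), Disjoint (Ioc M' M) (K' j) := by
        intro j
        refine Set.disjoint_left.mpr fun x hx hx' => ?_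
        exact absurd ((hK'sub j hx').2) (not_le.mpr hx.1)
      refine ⟨Fin.cons (Ioc M' M) (fun j => K' j), ?_, ?_, ?_, ?_, ?_⟩
      · intro j
        cases j using Fin.cases with
        | zero => exact measurableSet_Ioc
        | succ i => exact hK'meas i
      · intro i j hij
        cases i using Fin.cases with
        | zero =>
          cases j using Fin.cases with
          | zero => exact absurd rfl hij
          | succ j' => exact hd0 j'
        | succ i' =>
          cases j using Fin.cases with
          | zero => exact (hd0 i').symm
          | succ j' =>
            exact hK'disj (fun h => hij (congrArg Fin.succ h))
      · intro j
        cases j using Fin.cases with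
        | zero =>
          exact Set.Ioc_subset_Ioc hM'nonneg le_rfl
        | succ i =>
          simp only [Fin.cons_succ]
          refine (hK'sub i).trans (Set.Ioc_subset_Ioc le_rfl ?_)
          rw [hMM']
          linarith
      · intro j
        cases j using Fin.cases with
        | zero =>
          simp only [Fin.cons_zero, Real.volume_Ioc]
          congr 1
          rw [hMM']; ring
        | succ i => exact hK'vol i
      · intro j
        cases j using Fin.cases with
        | zero =>
          simp only [Fin.cons_zero, StieltjesFunction.measure_Ioc]
          apply ENNReal.ofReal_le_ofReal
          have hfMM : φ M' = f M - f M' := by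
            simp only [hφ]
            congr 2
            rw [hMM']; ring
          linarith [hbot, hfMM]
        | succ i => exact hK'f i
    case pos =>
      -- Case B : find a window with f-mass exactly m
      obtain ⟨s₁, hs₁, hφs₁⟩ := hcase
      obtain ⟨s', hs'mem, hφs'⟩ :=
        (intermediate_value_Icc' (f := φ) hs₁.1 hφc.continuousOn) (Set.mem_Icc.mpr ⟨hφs₁, hφ0⟩)
      have hs'0 : 0 ≤ s' := hs'mem.1
      have hs'M : s' ≤ M' := hs'mem.2.trans hs₁.2
      have hkey : f (s' + a 0) = f s' + m := by
        simp only [hφ] at hφs'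
        linarith
      -- the glued Stieltjes function
      have hf'mono : Monotone (fun s => if s ≤ s' then f s else f (s + a 0) - m) := by
        intro x y hxy
        dsimp only
        by_cases hx : x ≤ s' <;> by_cases hy : y ≤ s'
        · rw [if_pos hx, if_pos hy]; exact f.mono hxy
        · rw [if_pos hx, if_neg hy]
          have h1 : f x ≤ f s' := f.mono hx
          have h2 : f (s' + a 0) ≤ f (y + a 0) := f.mono (by linarith [not_le.mp hy])
          linarith [hkey]
        · exact absurd (hxy.trans hy) hx
        · rw [if_neg hx, if_neg hy]
          have h1 : f (x + a 0) ≤ f (y + a 0) := f.mono (by linarith)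
          linarith
      have hf'c : Continuous (fun s => if s ≤ s' then f s else f (s + a 0) - m) := by
        apply Continuous.if_le hfc ((hfc.comp (continuous_id.add continuous_const)).sub continuous_const)
          continuous_id continuous_const
        intro x hx
        simp only [Function.comp_apply, id_eq, Pi.sub_apply, Pi.add_apply] at hx ⊢
        rw [hx]
        linarith [hkey]
      set f' : StieltjesFunction ℝ := mkStj _ hf'mono hf'c with hf'
      have hf'app : ∀ x, f' x = if x ≤ s' then f x else f (x + a 0) - m := fun x => rfl
      have hf'0 : f' 0 = 0 := by rw [hf'app, if_pos hs'0, hf0]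
      have hm' : ∀ t : Fin (n+1), (((t:ℕ) : ℝ) + 1) * m ≤ f' (prefA a' t) := by
        intro t
        rw [hf'app]
        by_cases hAt : prefA a' t ≤ s'
        · rw [if_pos hAt]
          exact hmlow t
        · rw [if_neg hAt]
          have hsucc := hm t.succ
          rw [Fin.val_succ] at hsucc
          push_cast at hsucc
          have heq : prefA a' t + a 0 = prefA a t.succ := by
            rw [prefA_succ]; ring
          rw [heq]
          linarith
      obtain ⟨K', hK'meas, hK'disj, hK'sub, hK'vol, hK'f⟩ := IH f' hf'c hf'0 a' hpos' hmono' m hm'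
      -- glue back
      set Lo : Fin (n+1) → Set ℝ := fun j => K' j ∩ Iic s' with hLo
      set Up : Fin (n+1) → Set ℝ := fun j => (fun x => x - a 0) ⁻¹' (K' j ∩ Ioi s') with hUp
      have hLomeas : ∀ j, MeasurableSet (Lo j) := fun j => (hK'meas j).inter measurableSet_Iic
      have hUpmeas : ∀ j, MeasurableSet (Up j) :=
        fun j => ((hK'meas j).inter measurableSet_Ioi).preimage (by fun_prop)
      have hLo_sub : ∀ j, Lo j ⊆ Iic s' := fun j => Set.inter_subset_right
      have hUp_sub : ∀ j, Up j ⊆ Ioi (s' + a 0) := by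
        intro j x hx
        have : x - a 0 ∈ Ioi s' := hx.2
        simp only [Set.mem_Ioi] at this ⊢
        linarith
      have hLoUp_disj : ∀ i j, Disjoint (Lo i) (Up j) := by
        intro i j
        refine Set.disjoint_left.mpr fun x hx hx' => ?_
        have h1 : x ≤ s' := hLo_sub i hx
        have h2 : s' + a 0 < x := hUp_sub j hx'
        linarith
      have htrans : (fun x : ℝ => x - a 0) = fun x => x + (-(a 0)) := by
        funext x; ring
      have hvolUp : ∀ j, volume (Up j) = volume (K' j ∩ Ioi s') := by
        intro j
        rw [hUp, htrans]
        exact measure_preimage_add_right volume (-(a 0)) _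
      set K : Fin (n+2) → Set ℝ := Fin.cons (Ioc s' (s' + a 0)) (fun j => Lo j ∪ Up j) with hK
      have hKmeas : ∀ j, MeasurableSet (K j) := by
        intro j
        cases j using Fin.cases with
        | zero => exact measurableSet_Ioc
        | succ i => exact (hLomeas i).union (hUpmeas i)
      have hd0 : ∀ j : Fin (n+1), Disjoint (Ioc s' (s' + a 0)) (Lo j ∪ Up j) := by
        intro j
        refine Set.disjoint_left.mpr fun x hx hx' => ?_
        rcases hx' with h | h
        · exact absurd (hLo_sub j h) (not_le.mpr hx.1)
        · exact absurd hx.2 (not_le.mpr (hUp_sub j h))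
      have hdd : ∀ i j : Fin (n+1), i ≠ j → Disjoint (Lo i ∪ Up i) (Lo j ∪ Up j) := by
        intro i j hij
        have hK'd : Disjoint (K' i) (K' j) := hK'disj hij
        refine Set.disjoint_union_left.mpr ⟨?_, ?_⟩ <;> refine Set.disjoint_union_right.mpr ⟨?_, ?_⟩
        · exact (hK'd.mono Set.inter_subset_left Set.inter_subset_left)
        · exact hLoUp_disj i j
        · exact (hLoUp_disj j i).symm
        · refine Set.disjoint_left.mpr fun x hx hx' => ?_
          exact Set.disjoint_left.mp hK'd hx.1 hx'.1
      refine ⟨K, hKmeas, ?_, ?_, ?_, ?_⟩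
      · intro i j hij
        cases i using Fin.cases with
        | zero =>
          cases j using Fin.cases with
          | zero => exact absurd rfl hij
          | succ j' => exact hd0 j'
        | succ i' =>
          cases j using Fin.cases with
          | zero => exact (hd0 i').symm
          | succ j' =>
            exact hdd i' j' (fun h => hij (congrArg Fin.succ h))
      · intro j
        cases j using Fin.cases with
        | zero =>
          simp only [hK, Fin.cons_zero]
          refine Set.Ioc_subset_Ioc hs'0 ?_
          rw [hMM']; linarith
        | succ i =>
          simp only [hK, Fin.cons_succ]
          intro x hx
          rcases hx with h | h
          · have hxx := hK'sub i h.1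
            refine ⟨hxx.1, hxx.2.trans ?_⟩
            rw [hMM']; linarith
          · have h1 : x - a 0 ∈ K' i := h.1
            have h2 := hK'sub i h1
            constructor
            · linarith [h2.1, hpos]
            · rw [hMM']; linarith [h2.2]
      · intro j
        cases j using Fin.cases with
        | zero =>
          simp only [hK, Fin.cons_zero, Real.volume_Ioc]
          congr 1; ring
        | succ i =>
          simp only [hK, Fin.cons_succ]
          rw [measure_union (hLoUp_disj i i) (hUpmeas i), hvolUp i, hLo,
            split_measure volume (hK'meas i) s']
          exact hK'vol i
      · intro j
        cases j using Fin.cases with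
        | zero =>
          simp only [hK, Fin.cons_zero, StieltjesFunction.measure_Ioc]
          apply ENNReal.ofReal_le_ofReal
          linarith [hkey]
        | succ i =>
          simp only [hK, Fin.cons_succ]
          rw [measure_union (hLoUp_disj i i) (hUpmeas i)]
          have hLoeq : f.measure (Lo i) = f'.measure (Lo i) := by
            refine stieltjes_eq_on_Iic f f' s' 0 ?_ (hLomeas i) (hLo_sub i)
            intro x hx
            rw [hf'app, if_pos hx, add_zero]
          set f₂ : StieltjesFunction ℝ := mkStj (fun y => f (y + a 0))
            (fun x y hxy => f.mono (by linarith))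
            (hfc.comp (continuous_id.add continuous_const)) with hf₂
          have hUpeq : f.measure (Up i) = f₂.measure (K' i ∩ Ioi s') := by
            rw [hUp]
            exact (stieltjes_translate f (a 0) f₂ (fun x => rfl)
              ((hK'meas i).inter measurableSet_Ioi)).symm
          have hf₂f' : f₂.measure (K' i ∩ Ioi s') = f'.measure (K' i ∩ Ioi s') := by
            refine stieltjes_eq_on_Ioi f₂ f' s' m ?_ ((hK'meas i).inter measurableSet_Ioi)
              Set.inter_subset_right
            intro x hx
            rcases eq_or_lt_of_le hx with h | h
            · subst h
              rw [hf'app, if_pos le_rfl]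
              exact hkey
            · rw [hf'app, if_neg (not_le.mpr h)]
              show f (x + a 0) = f (x + a 0) - m + m
              ring
          rw [hLoeq, hUpeq, hf₂f', split_measure f'.measure (hK'meas i) s']
          exact hK'f i

end AuxLemmas

/-- Lemma 4 of the paper (key construction for tightness): if
p̲_l + Σ_j p̄_{b_j} ≤ 1 and R_l solves the certified-radius equation, then for
every δ ≠ 0 with ‖δ‖₂ > R_l there are k pairwise disjoint measurable sets
C₀,…,C_{k-1} contained in the complement of
A_l = {z : δᵀ(z−x) ≤ σ‖δ‖₂Φ⁻¹(p̲_l)} with Pr(X ∈ C_j) = p̄_{b_j} and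
Pr(Y ∈ C_j) ≥ min_{1≤t≤k} Pr(Y ∈ B_{S_t})/t, where
B_{S_t} = {z : δᵀ(z−x) ≥ σ‖δ‖₂Φ⁻¹(1−p̄_{S_t})}. -/
theorem tightness_region_construction
    {d : ℕ} (hd : 1 ≤ d) (σ : ℝ) (hσ : 0 < σ) (x : Fin d → ℝ)
    (k : ℕ) (hk : 1 ≤ k)
    (pl : ℝ) (hpl : pl ∈ Set.Ioo (0 : ℝ) 1)
    (pbar : Fin k → ℝ) (hmono : Monotone pbar)
    (pS : Fin k → ℝ)
    (hpS : ∀ t, pS t = ∑ j ∈ Finset.univ.filter (fun j => j ≤ t), pbar j)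
    (hpS01 : ∀ t, pS t ∈ Set.Ioo (0 : ℝ) 1)
    (hsum : pl + ∑ j, pbar j ≤ 1)
    (R : ℝ)
    (hR : Phi (PhiInv pl - R / σ) -
      (⨅ t : Fin k, Phi (PhiInv (pS t) + R / σ) / ((t : ℕ) + 1)) = 0)
    (δ : Fin d → ℝ) (hδ0 : δ ≠ 0) (hδ : R < l2norm δ) :
    ∃ C : Fin k → Set (Fin d → ℝ),
      (∀ j, MeasurableSet (C j)) ∧
      (Pairwise fun i j => Disjoint (C i) (C j)) ∧
      (∀ j, C j ⊆ {z | dotp δ (z - x) ≤ σ * l2norm δ * PhiInv pl}ᶜ) ∧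
      (∀ j, (gaussianVec x σ (C j)).toReal = pbar j) ∧
      (∀ j, (⨅ t : Fin k,
          (gaussianVec (x + δ) σ
            {z | σ * l2norm δ * PhiInv (1 - pS t) ≤ dotp δ (z - x)}).toReal
              / ((t : ℕ) + 1))
        ≤ (gaussianVec (x + δ) σ (C j)).toReal) := by
  obtain ⟨n, rfl⟩ : ∃ n, k = n + 1 := ⟨k - 1, (Nat.succ_pred_eq_of_pos hk).symm⟩
  clear hk hd hR hδ R
  -- basic quantities
  set u : (Fin d → ℝ) → ℝ := fun z => ∑ i, δ i * z i with hu_def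
  have hu : Measurable u := by rw [hu_def]; fun_prop
  set Q : ℝ := ∑ i, δ i ^ 2 with hQ_def
  have hQpos : 0 < Q := by
    obtain ⟨i, hi⟩ := Function.ne_iff.mp hδ0
    exact lt_of_lt_of_le (pow_two_pos_of_ne_zero hi)
      (Finset.single_le_sum (f := fun i => δ i ^ 2) (fun i _ => sq_nonneg _) (Finset.mem_univ i))
  have hl2 : l2norm δ = Real.sqrt Q := rfl
  set s : ℝ := σ * l2norm δ with hs_def
  have hspos : 0 < s := mul_pos hσ (by rw [hl2]; exact Real.sqrt_pos.mpr hQpos)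
  have hs2 : s ^ 2 = σ ^ 2 * Q := by
    rw [hs_def, hl2, mul_pow, Real.sq_sqrt hQpos.le]
  set V : NNReal := (∑ i, Real.toNNReal (δ i ^ 2)) * Real.toNNReal (σ ^ 2) with hV_def
  have hVcoe : (V : ℝ) = Q * σ ^ 2 := by
    rw [hV_def]
    push_cast
    congr 1
    · rw [hQ_def]
      exact Finset.sum_congr rfl fun i _ => Real.coe_toNNReal _ (sq_nonneg _)
    · exact Real.coe_toNNReal _ (sq_nonneg _)
  have hVne : V ≠ 0 := by
    intro h
    have : (V : ℝ) = 0 := by rw [h]; simp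
    rw [hVcoe] at this
    nlinarith
  haveI := gaussNA 0 (v := 1) one_ne_zero
  -- the law of u under gaussianVec
  have hlaw : ∀ mvec : Fin d → ℝ, Measure.map u (gaussianVec mvec σ) = gaussianReal (u mvec) V := by
    intro mvec
    rw [gaussianVec, hu_def]
    exact gauss_pi_map d δ mvec (Real.toNNReal (σ ^ 2))
  have hstd : ∀ c : ℝ, gaussianReal c V = Measure.map (fun y => s * y + c) (gaussianReal 0 1) := by
    intro c
    have h1 : Measure.map (fun y : ℝ => s * y) (gaussianReal 0 1) = gaussianReal 0 V := by
      rw [gaussianReal_map_const_mul s]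
      congr 1
      · ring
      · ext
        push_cast
        rw [hVcoe, hs2]
        ring
    have h2 : (fun y : ℝ => s * y + c) = (fun w => w + c) ∘ (fun y => s * y) := rfl
    rw [h2, ← Measure.map_map (by fun_prop) (by fun_prop), h1, gaussianReal_map_add_const, zero_add]
  haveI : IsProbabilityMeasure (gaussianVec x σ) := by rw [gaussianVec]; infer_instance
  haveI : IsProbabilityMeasure (gaussianVec (x + δ) σ) := by rw [gaussianVec]; infer_instance
  set X := gaussianVec x σ with hX_def
  set Y := gaussianVec (x + δ) σ with hY_def
  set cX : ℝ := u x with hcX_def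
  set ξ : (Fin d → ℝ) → ℝ := fun z => 1 - Phi ((u z - cX) / s) with hξ_def
  have hξm : Measurable ξ := by
    apply Measurable.const_sub
    exact continuous_Phi.measurable.comp ((hu.sub measurable_const).div_const s)
  have hξ01 : ∀ z, 0 < ξ z ∧ ξ z < 1 := by
    intro z
    constructor
    · have := Phi_lt_one ((u z - cX) / s); simp only [hξ_def]; linarith
    · have := Phi_pos ((u z - cX) / s); simp only [hξ_def]; linarith
  -- the law of ξ under X is uniform on (0,1]
  have hmapX : Measure.map ξ X = Measure.map (fun y => 1 - Phi y) (gaussianReal 0 1) := by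
    have hcomp : ξ = (fun w => 1 - Phi ((w - cX) / s)) ∘ u := rfl
    rw [hcomp, ← Measure.map_map (by
        apply Measurable.const_sub
        exact continuous_Phi.measurable.comp ((measurable_id.sub measurable_const).div_const s)) hu,
      hX_def, hlaw, ← hcX_def, hstd cX,
      Measure.map_map (by
        apply Measurable.const_sub
        exact continuous_Phi.measurable.comp ((measurable_id.sub measurable_const).div_const s)) (by fun_prop)]
    congr 1
    funext y
    simp only [Function.comp_apply]
    congr 2
    field_simp
    ring
  haveI : IsProbabilityMeasure (Measure.map ξ X) := Measure.isProbabilityMeasure_map hξm.aemeasurable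
  haveI : IsProbabilityMeasure (Measure.map ξ Y) := Measure.isProbabilityMeasure_map hξm.aemeasurable
  haveI : IsProbabilityMeasure (volume.restrict (Ioc (0:ℝ) 1)) := by
    constructor
    rw [Measure.restrict_apply MeasurableSet.univ, Set.univ_inter, Real.volume_Ioc]
    norm_num
  have hXunif : Measure.map ξ X = volume.restrict (Ioc (0:ℝ) 1) := by
    apply Measure.ext_of_Iic
    intro b
    rw [hmapX, Measure.map_apply (by
        apply Measurable.const_sub
        exact continuous_Phi.measurable) measurableSet_Iic,
      Measure.restrict_apply measurableSet_Iic]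
    rcases le_or_gt b 0 with hb | hb
    · have h1 : (fun y => 1 - Phi y) ⁻¹' (Iic b) = ∅ := by
        ext y
        simp only [Set.mem_preimage, Set.mem_Iic, Set.mem_empty_iff_false, iff_false, not_le]
        have := Phi_lt_one y
        linarith
      have h2 : Iic b ∩ Ioc (0:ℝ) 1 = ∅ := by
        ext y
        simp only [Set.mem_inter_iff, Set.mem_Iic, Set.mem_Ioc, Set.mem_empty_iff_false, iff_false]
        rintro ⟨h3, h4, h5⟩
        linarith
      rw [h1, h2]
      simp
    rcases lt_or_ge b 1 with hb1 | hb1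
    · have hb01 : (1 - b) ∈ Set.Ioo (0:ℝ) 1 := ⟨by linarith, by linarith⟩
      have h1 : (fun y => 1 - Phi y) ⁻¹' (Iic b) = Ici (PhiInv (1 - b)) := by
        ext y
        simp only [Set.mem_preimage, Set.mem_Iic, Set.mem_Ici]
        rw [PhiInv_le_iff hb01]
        constructor <;> intro h <;> linarith
      have h2 : Iic b ∩ Ioc (0:ℝ) 1 = Ioc 0 b := by
        ext y
        simp only [Set.mem_inter_iff, Set.mem_Iic, Set.mem_Ioc]
        constructor
        · rintro ⟨h3, h4, h5⟩; exact ⟨h4, h3⟩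
        · rintro ⟨h3, h4⟩; exact ⟨h4, h3, by linarith⟩
      rw [h1, h2, Real.volume_Ioc, sub_zero]
      have h3 : gaussianReal 0 1 (Ici (PhiInv (1-b))) = gaussianReal 0 1 (Ioi (PhiInv (1-b))) :=
        (measure_congr (Ioi_ae_eq_Ici (μ := gaussianReal 0 1) (a := PhiInv (1-b)))).symm
      rw [h3, ← Set.compl_Iic, measure_compl measurableSet_Iic (measure_ne_top _ _),
        measure_univ]
      have h4 : gaussianReal 0 1 (Iic (PhiInv (1-b))) = ENNReal.ofReal (1 - b) := by
        have := ENNReal.ofReal_toReal (measure_ne_top (gaussianReal 0 1) (Iic (PhiInv (1-b))))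
        rw [← this]
        congr 1
        exact Phi_PhiInv hb01
      rw [h4, ← ENNReal.ofReal_one, ← ENNReal.ofReal_sub 1 (by linarith)]
      congr 1
      ring
    · have h1 : (fun y => 1 - Phi y) ⁻¹' (Iic b) = univ := by
        ext y
        simp only [Set.mem_preimage, Set.mem_Iic, Set.mem_univ, iff_true]
        have := Phi_pos y
        linarith
      have h2 : Iic b ∩ Ioc (0:ℝ) 1 = Ioc 0 1 := by
        apply Set.inter_eq_self_of_subset_right
        intro y hy
        exact hy.2.trans hb1
      rw [h1, h2, measure_univ, Real.volume_Ioc]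
      norm_num
  -- Y side: no atoms under ξ
  have hYlevel : ∀ w : ℝ, Y {z | u z = w} = 0 := by
    intro w
    have h1 : {z : Fin d → ℝ | u z = w} = u ⁻¹' {w} := rfl
    rw [h1, ← Measure.map_apply hu (measurableSet_singleton w), hY_def, hlaw]
    haveI := gaussNA (u (x + δ)) hVne
    exact measure_singleton w
  have hXlevel : ∀ w : ℝ, X {z | u z = w} = 0 := by
    intro w
    have h1 : {z : Fin d → ℝ | u z = w} = u ⁻¹' {w} := rfl
    rw [h1, ← Measure.map_apply hu (measurableSet_singleton w), hX_def, hlaw]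
    haveI := gaussNA (u x) hVne
    exact measure_singleton w
  have hYatom : ∀ b : ℝ, (Measure.map ξ Y) {b} = 0 := by
    intro b
    rw [Measure.map_apply hξm (measurableSet_singleton b)]
    by_cases hb : b ∈ Set.Ioo (0:ℝ) 1
    · have h1b : (1 - b) ∈ Set.Ioo (0:ℝ) 1 := ⟨by linarith [hb.2], by linarith [hb.1]⟩
      have h1 : ξ ⁻¹' {b} ⊆ {z | u z = cX + s * PhiInv (1 - b)} := by
        intro z hz
        have hz' : 1 - Phi ((u z - cX) / s) = b := hz
        have h2 : Phi ((u z - cX) / s) = 1 - b := by linarith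
        have h3 := (Phi_eq_iff h1b _).mp h2
        have h4 : u z - cX = s * PhiInv (1 - b) := by
          field_simp at h3
          linarith [h3]
        show u z = _
        linarith
      exact measure_mono_null h1 (hYlevel _)
    · have h1 : ξ ⁻¹' {b} = ∅ := by
        ext z
        simp only [Set.mem_preimage, Set.mem_singleton_iff, Set.mem_empty_iff_false, iff_false]
        intro hz
        apply hb
        rw [← hz]
        exact ⟨(hξ01 z).1, (hξ01 z).2⟩
      rw [h1]
      exact measure_empty
  set G := cdf (Measure.map ξ Y) with hG_def
  have hGc : Continuous G := continuous_cdf_of_noAtoms _ hYatom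
  have hGmeasure : G.measure = Measure.map ξ Y := measure_cdf _
  have hG0 : G 0 = 0 := by
    rw [hG_def, cdf_eq_real, measureReal_def, Measure.map_apply hξm measurableSet_Iic]
    have h1 : ξ ⁻¹' (Iic 0) = ∅ := by
      ext z
      simp only [Set.mem_preimage, Set.mem_Iic, Set.mem_empty_iff_false, iff_false, not_le]
      exact (hξ01 z).1
    rw [h1]
    simp
  -- identify preimages of Iic (pS t) with the B sets
  have hdotp : ∀ z, dotp δ (z - x) = u z - cX := by
    intro z
    rw [dotp, hu_def, hcX_def]
    rw [← Finset.sum_sub_distrib]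
    apply Finset.sum_congr rfl
    intro i _
    have : (z - x) i = z i - x i := rfl
    rw [this]
    ring
  have hBpre : ∀ t : Fin (n+1), ξ ⁻¹' (Iic (pS t))
      = {z | σ * l2norm δ * PhiInv (1 - pS t) ≤ dotp δ (z - x)} := by
    intro t
    have h1t : (1 - pS t) ∈ Set.Ioo (0:ℝ) 1 := ⟨by linarith [(hpS01 t).2], by linarith [(hpS01 t).1]⟩
    ext z
    simp only [Set.mem_preimage, Set.mem_Iic, Set.mem_setOf_eq]
    rw [hdotp z, ← hs_def]
    constructor
    · intro h
      have h2 : 1 - pS t ≤ Phi ((u z - cX) / s) := by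
        simp only [hξ_def] at h
        linarith
      have h3 := (PhiInv_le_iff h1t _).mpr h2
      calc s * PhiInv (1 - pS t) ≤ s * ((u z - cX) / s) := by
            apply mul_le_mul_of_nonneg_left h3 hspos.le
        _ = u z - cX := by field_simp
    · intro h
      have h3 : PhiInv (1 - pS t) ≤ (u z - cX) / s := by
        rw [le_div_iff₀ hspos]
        linarith [mul_comm (PhiInv (1 - pS t)) s]
      have h2 := (PhiInv_le_iff h1t _).mp h3
      show 1 - Phi ((u z - cX) / s) ≤ pS t
      linarith
  -- the target infimum
  set m : ℝ := ⨅ t : Fin (n+1),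
      (Y {z | σ * l2norm δ * PhiInv (1 - pS t) ≤ dotp δ (z - x)}).toReal / ((t:ℕ) + 1) with hm_def
  have hGval : ∀ t : Fin (n+1), G (pS t)
      = (Y {z | σ * l2norm δ * PhiInv (1 - pS t) ≤ dotp δ (z - x)}).toReal := by
    intro t
    rw [hG_def, cdf_eq_real, measureReal_def, Measure.map_apply hξm measurableSet_Iic, hBpre t]
  have hmhyp : ∀ t : Fin (n+1), (((t:ℕ) : ℝ) + 1) * m ≤ G (prefA pbar t) := by
    intro t
    have h1 : prefA pbar t = pS t := (hpS t).symm
    rw [h1, hGval t]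
    have h2 : m ≤ (Y {z | σ * l2norm δ * PhiInv (1 - pS t) ≤ dotp δ (z - x)}).toReal / ((t:ℕ) + 1) :=
      ciInf_le (Set.Finite.bddBelow (Set.finite_range _)) t
    have h3 : (0:ℝ) < (t:ℕ) + 1 := by positivity
    calc (((t:ℕ) : ℝ) + 1) * m
        ≤ (((t:ℕ) : ℝ) + 1) * ((Y {z | σ * l2norm δ * PhiInv (1 - pS t) ≤ dotp δ (z - x)}).toReal / ((t:ℕ) + 1)) :=
          mul_le_mul_of_nonneg_left h2 h3.le
      _ = _ := by field_simp
  -- run the core division lemma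
  have hpbar0 : 0 < pbar 0 := by
    have := (hpS01 0).1
    rw [hpS 0] at this
    have h1 : (∑ j ∈ Finset.univ.filter (fun j => j ≤ (0 : Fin (n+1))), pbar j) = prefA pbar 0 := rfl
    rw [h1, prefA_zero] at this
    exact this
  obtain ⟨K, hKmeas, hKdisj, hKsub, hKvol, hKf⟩ :=
    core_division n G hGc hG0 pbar hpbar0 hmono m hmhyp
  set M : ℝ := ∑ i, pbar i with hM_def
  have hMeq : M = pS (Fin.last n) := by rw [hpS, hM_def, ← prefA_last pbar]; rfl
  have hM01 : M ∈ Set.Ioo (0:ℝ) 1 := hMeq ▸ hpS01 (Fin.last n)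
  have hplM : pl ≤ 1 - M := by rw [hM_def]; linarith [hsum]
  set N : Set (Fin d → ℝ) := {z | dotp δ (z - x) ≤ σ * l2norm δ * PhiInv pl} with hN_def
  have hNmeas : MeasurableSet N := by
    have h1 : N = {z | u z ≤ cX + s * PhiInv pl} := by
      ext z
      simp only [hN_def, Set.mem_setOf_eq, hdotp z, ← hs_def]
      constructor <;> intro h <;> linarith
    rw [h1]
    exact measurableSet_le hu measurable_const
  -- the boundary intersection is null
  have hbd : ∀ j, ξ ⁻¹' (K j) ∩ N ⊆ {z | u z = cX + s * PhiInv pl} := by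
    intro j z hz
    obtain ⟨hz1, hz2⟩ := hz
    have hKj := hKsub j hz1
    have hξM : ξ z ≤ M := hKj.2
    have h1M : (1 - M) ∈ Set.Ioo (0:ℝ) 1 := ⟨by linarith [hM01.2], by linarith [hM01.1]⟩
    have h2 : 1 - M ≤ Phi ((u z - cX) / s) := by
      have : 1 - Phi ((u z - cX) / s) ≤ M := hξM
      linarith
    have h3 : PhiInv (1 - M) ≤ (u z - cX) / s := (PhiInv_le_iff h1M _).mpr h2
    have h4 : PhiInv pl ≤ PhiInv (1 - M) := PhiInv_mono hpl h1M hplM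
    have h5 : u z - cX ≤ s * PhiInv pl := by
      have := hz2
      simp only [hN_def, Set.mem_setOf_eq, hdotp z, ← hs_def] at this
      linarith
    have h6 : (u z - cX) / s ≤ PhiInv pl := by
      rw [div_le_iff₀ hspos]
      linarith [mul_comm (PhiInv pl) s]
    have h7 : (u z - cX) / s = PhiInv pl := le_antisymm h6 (h4.trans h3)
    show u z = cX + s * PhiInv pl
    have h8 : u z - cX = s * PhiInv pl := by
      field_simp at h7
      linarith
    linarith
  set C : Fin (n+1) → Set (Fin d → ℝ) := fun j => ξ ⁻¹' (K j) \ N with hC_def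
  have hCmeas : ∀ j, MeasurableSet (C j) := fun j => ((hKmeas j).preimage hξm).diff hNmeas
  have hXC : ∀ j, X (C j) = ENNReal.ofReal (pbar j) := by
    intro j
    have h1 : X (ξ ⁻¹' (K j) ∩ N) = 0 :=
      measure_mono_null ((hbd j).trans (fun z hz => hz)) (hXlevel _)
    have h2 := measure_inter_add_diff (μ := X) (ξ ⁻¹' (K j)) hNmeas
    rw [h1, zero_add] at h2
    rw [hC_def, h2, ← Measure.map_apply hξm (hKmeas j), hXunif,
      Measure.restrict_apply (hKmeas j),
      Set.inter_eq_self_of_subset_left ((hKsub j).trans (Set.Ioc_subset_Ioc le_rfl hM01.2.le)),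
      hKvol j]
  have hYC : ∀ j, Y (C j) = (Measure.map ξ Y) (K j) := by
    intro j
    have h1 : Y (ξ ⁻¹' (K j) ∩ N) = 0 :=
      measure_mono_null ((hbd j).trans (fun z hz => hz)) (hYlevel _)
    have h2 := measure_inter_add_diff (μ := Y) (ξ ⁻¹' (K j)) hNmeas
    rw [h1, zero_add] at h2
    rw [hC_def, h2, ← Measure.map_apply hξm (hKmeas j)]
  refine ⟨C, hCmeas, ?_, ?_, ?_, ?_⟩
  · intro i j hij
    exact (Disjoint.preimage ξ (hKdisj hij)).mono Set.diff_subset Set.diff_subset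
  · intro j
    rw [hC_def]
    intro z hz
    exact hz.2
  · intro j
    rw [hXC j, ENNReal.toReal_ofReal (le_of_lt (lt_of_lt_of_le hpbar0 (hmono (Fin.zero_le j))))]
  · intro j
    rw [hYC j, ← hGmeasure]
    have h1 := hKf j
    have h2 : (ENNReal.ofReal m).toReal ≤ (G.measure (K j)).toReal :=
      ENNReal.toReal_mono (by
        rw [hGmeasure]
        exact measure_ne_top _ _) h1
    rcases le_or_gt m 0 with hm0 | hm0
    · exact hm0.trans ENNReal.toReal_nonneg
    · rw [ENNReal.toReal_ofReal hm0.le] at h2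
      exact h2
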